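/- Let P, P̄ be irreducible reversible Markov chains on [d] with stationary distributions π, π̄, let ε ∈ (0,1) with Distance(P,P̄) ≥ ε and max_i |π(i)/π̄(i) - 1| ≤ ε/2. Let S ⊆ [d] with Σ_{i,j∈S} Distribution(S,P̄,π̄)(i,j) ≥ 1 - ε/16. Then d²_Hel(Distribution(S,P,π̄), Distribution(S,P̄,π̄)) ≥ ε²/128. -/

import Mathlib

open Matrix BigOperators Finset

noncomputable def rho {n : Type*} [Fintype n] [DecidableEq n] (A : Matrix n n ℝ) : ℝ :=
  (spectralRadius ℂ (A.map (algebraMap ℝ ℂ))).toReal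

noncomputable def sqrtm {m n : Type*} (A : Matrix m n ℝ) : Matrix m n ℝ :=
  Matrix.of fun i j => Real.sqrt (A i j)

noncomputable def mcDist {n : Type*} [Fintype n] [DecidableEq n] (P Q : Matrix n n ℝ) : ℝ :=
  1 - rho (sqrtm (Matrix.hadamard P Q))

def IsStochastic {d : ℕ} (P : Matrix (Fin d) (Fin d) ℝ) : Prop :=
  (∀ i j, 0 ≤ P i j) ∧ ∀ i, ∑ j, P i j = 1

def IsIrreducibleMC {d : ℕ} (P : Matrix (Fin d) (Fin d) ℝ) : Prop :=
  ∀ i j, ∃ k, 0 < (P ^ k) i j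

def IsStationaryMC {d : ℕ} (P : Matrix (Fin d) (Fin d) ℝ) (π : Fin d → ℝ) : Prop :=
  (∀ i, 0 < π i) ∧ (∑ i, π i = 1) ∧ ∀ j, ∑ i, π i * P i j = π j

def IsReversible {d : ℕ} (P : Matrix (Fin d) (Fin d) ℝ) (π : Fin d → ℝ) : Prop :=
  ∀ i j, π i * P i j = π j * P j i

def subm {d : ℕ} (P : Matrix (Fin d) (Fin d) ℝ) (R T : Finset (Fin d)) :
    Matrix {x // x ∈ R} {x // x ∈ T} ℝ :=
  Matrix.of fun i j => P i.1 j.1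

noncomputable def censored {d : ℕ} (P : Matrix (Fin d) (Fin d) ℝ) (S : Finset (Fin d)) :
    Matrix {x // x ∈ S} {x // x ∈ S} ℝ :=
  subm P S S + ∑' t : ℕ, subm P S Sᶜ * (subm P Sᶜ Sᶜ) ^ (t + 1) * subm P Sᶜ S

/-- The probability of the pair `(i,j)` under `Distribution(S, P, ν)`. -/
noncomputable def distributionPair {d : ℕ} (S : Finset (Fin d))
    (P : Matrix (Fin d) (Fin d) ℝ) (ν : Fin d → ℝ) (i j : Fin d) : ℝ :=
  ν i * P i j / ∑ k ∈ S, ν k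

/-- The probability of the merged symbol `∞` under `Distribution(S, P, ν)`. -/
noncomputable def distributionInfty {d : ℕ} (S : Finset (Fin d))
    (P : Matrix (Fin d) (Fin d) ℝ) (ν : Fin d → ℝ) : ℝ :=
  1 - ∑ i ∈ S, ∑ j ∈ S, distributionPair S P ν i j


attribute [local instance] Matrix.linftyOpNormedRing Matrix.linftyOpNormedAlgebra

open scoped RealInnerProductSpace in
lemma rayleigh_le_rho {d : ℕ} (M : Matrix (Fin d) (Fin d) ℝ) (w : Fin d → ℝ)
    (hw : ∀ i, 0 < w i) (hsym : ∀ i j, w i * M i j = w j * M j i)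
    (S : Finset (Fin d)) (hS : S.Nonempty) :
    ∑ i ∈ S, ∑ j ∈ S, w i * M i j ≤ rho M * ∑ i ∈ S, w i := by
  classical
  obtain ⟨i₀, hi₀⟩ := hS
  haveI : Nonempty (Fin d) := ⟨i₀⟩
  have hw0 : ∀ i, Real.sqrt (w i) ≠ 0 := fun i => ne_of_gt (Real.sqrt_pos.2 (hw i))
  have hww : ∀ i, Real.sqrt (w i) * Real.sqrt (w i) = w i := fun i =>
    Real.mul_self_sqrt (hw i).le
  set A : Matrix (Fin d) (Fin d) ℝ :=
    Matrix.of (fun i j => Real.sqrt (w i) * M i j / Real.sqrt (w j)) with hAdef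
  have hA : A.IsHermitian := by
    ext i j
    simp only [Matrix.conjTranspose_apply, hAdef, Matrix.of_apply, star_trivial]
    rw [div_eq_div_iff (hw0 i) (hw0 j)]
    calc Real.sqrt (w j) * M j i * Real.sqrt (w j)
        = Real.sqrt (w j) * Real.sqrt (w j) * M j i := by ring
      _ = w j * M j i := by rw [hww]
      _ = w i * M i j := hsym j i
      _ = Real.sqrt (w i) * Real.sqrt (w i) * M i j := by rw [hww]
      _ = Real.sqrt (w i) * M i j * Real.sqrt (w i) := by ring
  set T : EuclideanSpace ℝ (Fin d) →ₗ[ℝ] EuclideanSpace ℝ (Fin d) :=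
    Matrix.toEuclideanLin A with hT
  have hTsym : T.IsSymmetric := (Matrix.isHermitian_iff_isSymmetric).1 hA
  set lam : ℝ := ⨆ x : { x : EuclideanSpace ℝ (Fin d) // x ≠ 0 },
      RCLike.re ⟪T x, x⟫ / ‖(x : EuclideanSpace ℝ (Fin d))‖ ^ 2 with hlam
  have heig : Module.End.HasEigenvalue T lam := by
    have := hTsym.hasEigenvalue_iSup_of_finiteDimensional
    exact this
  have hmemT : lam ∈ spectrum ℝ T := (Module.End.hasEigenvalue_iff_mem_spectrum).1 heig
  have hmem : lam ∈ spectrum ℝ A := by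
    have hspec : spectrum ℝ T = spectrum ℝ A := by
      have : T = Matrix.toLinAlgEquiv (PiLp.basisFun 2 ℝ (Fin d)) A := rfl
      rw [this, AlgEquiv.spectrum_eq]
    rw [← hspec]; exact hmemT
  -- lam ≤ rho M
  have hlam_le : lam ≤ rho M := by
    set D : Matrix (Fin d) (Fin d) ℝ := Matrix.diagonal fun i => Real.sqrt (w i) with hD
    set E : Matrix (Fin d) (Fin d) ℝ := Matrix.diagonal fun i => (Real.sqrt (w i))⁻¹ with hE
    have hdetA : (algebraMap ℝ (Matrix (Fin d) (Fin d) ℝ) lam - A).det = 0 := by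
      by_contra h
      exact (spectrum.mem_iff.1 hmem)
        ((Matrix.isUnit_iff_isUnit_det _).2 (isUnit_iff_ne_zero.2 h))
    have hconj : algebraMap ℝ (Matrix (Fin d) (Fin d) ℝ) lam - A
        = D * (algebraMap ℝ (Matrix (Fin d) (Fin d) ℝ) lam - M) * E := by
      ext i j
      simp only [Matrix.sub_apply, Matrix.algebraMap_matrix_apply, hAdef, Matrix.of_apply, hD, hE,
        Matrix.diagonal_mul, Matrix.mul_diagonal, Algebra.algebraMap_self, RingHom.id_apply]
      by_cases h : i = j
      · subst h
        simp only [if_true, eq_self_iff_true]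
        have e1 : Real.sqrt (w i) * M i i / Real.sqrt (w i) = M i i := by
          rw [mul_comm, mul_div_assoc, div_self (hw0 i), mul_one]
        have e2 : Real.sqrt (w i) * (lam - M i i) * (Real.sqrt (w i))⁻¹ = lam - M i i := by
          rw [mul_comm (Real.sqrt (w i)) (lam - M i i), mul_assoc, mul_inv_cancel₀ (hw0 i),
            mul_one]
        rw [e2, e1]
      · simp only [if_neg h, zero_sub, mul_neg, neg_mul, neg_inj, div_eq_mul_inv]
    have hDE : D.det * E.det = 1 := by
      rw [← Matrix.det_mul, hD, hE, Matrix.diagonal_mul_diagonal]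
      have : (fun i => Real.sqrt (w i) * (Real.sqrt (w i))⁻¹) = fun _ => (1:ℝ) := by
        funext i; exact mul_inv_cancel₀ (hw0 i)
      rw [this, Matrix.diagonal_one, Matrix.det_one]
    have hdetM : (algebraMap ℝ (Matrix (Fin d) (Fin d) ℝ) lam - M).det = 0 := by
      have h1 := hdetA
      rw [hconj, Matrix.det_mul, Matrix.det_mul] at h1
      have h2 : D.det * (algebraMap ℝ (Matrix (Fin d) (Fin d) ℝ) lam - M).det * E.det
          = (algebraMap ℝ (Matrix (Fin d) (Fin d) ℝ) lam - M).det := by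
        calc D.det * (algebraMap ℝ (Matrix (Fin d) (Fin d) ℝ) lam - M).det * E.det
            = (algebraMap ℝ (Matrix (Fin d) (Fin d) ℝ) lam - M).det * (D.det * E.det) := by ring
          _ = _ := by rw [hDE, mul_one]
      rw [h2] at h1; exact h1
    set Mc : Matrix (Fin d) (Fin d) ℂ := M.map (algebraMap ℝ ℂ) with hMc
    have hmapdet : (algebraMap ℂ (Matrix (Fin d) (Fin d) ℂ) (lam : ℂ) - Mc).det = 0 := by
      have hm : algebraMap ℂ (Matrix (Fin d) (Fin d) ℂ) (lam : ℂ) - Mc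
          = (algebraMap ℝ (Matrix (Fin d) (Fin d) ℝ) lam - M).map (algebraMap ℝ ℂ) := by
        ext i j
        simp only [hMc, Matrix.sub_apply, Matrix.map_apply, Matrix.algebraMap_matrix_apply,
          apply_ite (algebraMap ℝ ℂ), map_zero, Complex.coe_algebraMap]
        split_ifs <;> push_cast <;> simp
      rw [hm, show ((algebraMap ℝ (Matrix (Fin d) (Fin d) ℝ) lam - M).map (algebraMap ℝ ℂ))
          = (algebraMap ℝ ℂ).mapMatrix (algebraMap ℝ (Matrix (Fin d) (Fin d) ℝ) lam - M) from rfl,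
        ← RingHom.map_det, hdetM, map_zero]
    have hmemC : (lam : ℂ) ∈ spectrum ℂ Mc := by
      rw [spectrum.mem_iff]
      intro h
      rw [Matrix.isUnit_iff_isUnit_det, isUnit_iff_ne_zero] at h
      exact h hmapdet
    have hfin : spectralRadius ℂ Mc ≠ ⊤ :=
      (lt_of_le_of_lt (spectrum.spectralRadius_le_nnnorm (𝕜 := ℂ) Mc) ENNReal.coe_lt_top).ne
    have h1 : (‖(lam : ℂ)‖₊ : ENNReal) ≤ spectralRadius ℂ Mc :=
      le_iSup₂ (f := fun k (_ : k ∈ spectrum ℂ Mc) => (‖k‖₊ : ENNReal)) (lam : ℂ) hmemC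
    have h2 : ‖(lam : ℂ)‖ ≤ rho M := by
      have := ENNReal.toReal_mono hfin h1
      simpa [rho, hMc] using this
    calc lam ≤ |lam| := le_abs_self lam
      _ = ‖(lam : ℂ)‖ := (RCLike.norm_ofReal (K := ℂ) lam).symm
      _ ≤ rho M := h2
  -- Rayleigh quotient at the indicator vector
  set v : Fin d → ℝ := fun i => if i ∈ S then Real.sqrt (w i) else 0 with hv
  set x₀ : EuclideanSpace ℝ (Fin d) := (WithLp.equiv 2 (Fin d → ℝ)).symm v with hx₀
  have hx₀ne : x₀ ≠ 0 := by
    intro h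
    have : v i₀ = 0 := by
      have := congrFun (congrArg (WithLp.equiv 2 (Fin d → ℝ)) h) i₀
      simpa [hx₀] using this
    rw [hv] at this
    simp only [if_pos hi₀] at this
    exact hw0 i₀ this
  have hW : 0 < ∑ i ∈ S, w i := Finset.sum_pos (fun i _ => hw i) ⟨i₀, hi₀⟩
  have hinner : ⟪T x₀, x₀⟫ = ∑ i ∈ S, ∑ j ∈ S, w i * M i j := by
    show dotProduct v (star (A *ᵥ v)) = _
    rw [dotProduct_comm]
    have h1 : dotProduct (star (A *ᵥ v)) v = ∑ i, (∑ j, A i j * v j) * v i := by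
      simp [dotProduct, Matrix.mulVec, star_trivial]
    rw [h1]
    rw [← Finset.sum_subset (Finset.subset_univ S) (fun i _ hi => by
      simp [hv, if_neg hi])]
    refine Finset.sum_congr rfl (fun i hi => ?_)
    rw [← Finset.sum_subset (Finset.subset_univ S) (fun j _ hj => by
      simp [hv, if_neg hj])]
    rw [hv]
    simp only [if_pos hi]
    rw [Finset.sum_mul]
    refine Finset.sum_congr rfl (fun j hj => ?_)
    simp only [if_pos hj, hAdef, Matrix.of_apply]
    rw [div_mul_cancel₀ _ (hw0 j)]
    calc Real.sqrt (w i) * M i j * Real.sqrt (w i)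
        = Real.sqrt (w i) * Real.sqrt (w i) * M i j := by ring
      _ = w i * M i j := by rw [hww]
  have hnorm : ‖x₀‖ ^ 2 = ∑ i ∈ S, w i := by
    rw [hx₀]
    rw [EuclideanSpace.norm_eq]
    rw [Real.sq_sqrt (by positivity)]
    show ∑ i, ‖v i‖ ^ 2 = _
    rw [← Finset.sum_subset (Finset.subset_univ S) (fun i _ hi => by
      simp [hv, if_neg hi])]
    refine Finset.sum_congr rfl (fun i hi => ?_)
    rw [hv]
    simp only [if_pos hi, Real.norm_eq_abs, sq_abs]
    rw [Real.sq_sqrt (hw i).le]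
  have hbdd : BddAbove (Set.range fun x : { x : EuclideanSpace ℝ (Fin d) // x ≠ 0 } =>
      RCLike.re ⟪T x, x⟫ / ‖(x : EuclideanSpace ℝ (Fin d))‖ ^ 2) := by
    refine ⟨‖LinearMap.toContinuousLinearMap T‖, ?_⟩
    rintro r ⟨x, rfl⟩
    have hx : (0:ℝ) < ‖(x : EuclideanSpace ℝ (Fin d))‖ ^ 2 := by
      have : (x : EuclideanSpace ℝ (Fin d)) ≠ 0 := x.2
      exact pow_pos (norm_pos_iff.mpr this) 2
    rw [div_le_iff₀ hx]
    have h1 : RCLike.re ⟪T x, x⟫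
        ≤ ‖T (x : EuclideanSpace ℝ (Fin d))‖ * ‖(x : EuclideanSpace ℝ (Fin d))‖ := by
      calc RCLike.re ⟪T x, x⟫ = ⟪T x, x⟫ := rfl
        _ ≤ ‖T (x : EuclideanSpace ℝ (Fin d))‖ * ‖(x : EuclideanSpace ℝ (Fin d))‖ :=
          real_inner_le_norm _ _
    refine h1.trans ?_
    have h2 : ‖T (x : EuclideanSpace ℝ (Fin d))‖
        ≤ ‖LinearMap.toContinuousLinearMap T‖ * ‖(x : EuclideanSpace ℝ (Fin d))‖ :=
      (LinearMap.toContinuousLinearMap T).le_opNorm _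
    calc ‖T (x : EuclideanSpace ℝ (Fin d))‖ * ‖(x : EuclideanSpace ℝ (Fin d))‖
        ≤ (‖LinearMap.toContinuousLinearMap T‖ * ‖(x : EuclideanSpace ℝ (Fin d))‖)
            * ‖(x : EuclideanSpace ℝ (Fin d))‖ :=
          mul_le_mul_of_nonneg_right h2 (norm_nonneg _)
      _ = ‖LinearMap.toContinuousLinearMap T‖ * ‖(x : EuclideanSpace ℝ (Fin d))‖ ^ 2 := by ring
  have hquot : (∑ i ∈ S, ∑ j ∈ S, w i * M i j) / (∑ i ∈ S, w i) ≤ lam := by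
    have hle : (∑ i ∈ S, ∑ j ∈ S, w i * M i j) / (∑ i ∈ S, w i)
        = RCLike.re ⟪T x₀, x₀⟫ / ‖x₀‖ ^ 2 := by
      rw [hnorm, show RCLike.re ⟪T x₀, x₀⟫ = ⟪T x₀, x₀⟫ from rfl, hinner]
    rw [hle, hlam]
    exact le_ciSup hbdd ⟨x₀, hx₀ne⟩
  rw [div_le_iff₀ hW] at hquot
  exact hquot.trans (mul_le_mul_of_nonneg_right hlam_le hW.le)

/-- If `Distance(P,P̄) ≥ ε`, the stationary distributions are `ε/2`-close and `S`
carries `1 - ε/16` of the reference mass, then the squared Hellinger distance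
between `Distribution(S,P,π̄)` and `Distribution(S,P̄,π̄)` is at least `ε²/128`. -/
theorem hellinger_lower_bound_component {d : ℕ} (P Pbar : Matrix (Fin d) (Fin d) ℝ)
    (π πbar : Fin d → ℝ)
    (hP : IsStochastic P) (hPbar : IsStochastic Pbar)
    (hirr : IsIrreducibleMC P) (hirrbar : IsIrreducibleMC Pbar)
    (hstat : IsStationaryMC P π) (hstatbar : IsStationaryMC Pbar πbar)
    (hrev : IsReversible P π) (hrevbar : IsReversible Pbar πbar)
    (ε : ℝ) (hε : ε ∈ Set.Ioo (0 : ℝ) 1)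
    (hdist : ε ≤ mcDist P Pbar)
    (hclose : ∀ i, |π i / πbar i - 1| ≤ ε / 2)
    (S : Finset (Fin d))
    (hmass : 1 - ε / 16 ≤ ∑ i ∈ S, ∑ j ∈ S, distributionPair S Pbar πbar i j) :
    ε ^ 2 / 128
      ≤ 1 - ((∑ i ∈ S, ∑ j ∈ S,
            Real.sqrt (distributionPair S P πbar i j * distributionPair S Pbar πbar i j))
          + Real.sqrt (distributionInfty S P πbar * distributionInfty S Pbar πbar)) := by
  
  classical
  obtain ⟨hε0, hε1⟩ := hε
  -- S is nonempty
  have hSne : S.Nonempty := by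
    rcases Finset.eq_empty_or_nonempty S with h | h
    · exfalso
      subst h
      simp only [Finset.sum_empty] at hmass
      linarith
    · exact h
  set νS : ℝ := ∑ k ∈ S, πbar k with hνS
  have hν : 0 < νS := Finset.sum_pos (fun i _ => hstatbar.1 i) hSne
  set M : Matrix (Fin d) (Fin d) ℝ := sqrtm (Matrix.hadamard P Pbar) with hM
  have hMdef : ∀ i j, M i j = Real.sqrt (P i j * Pbar i j) := fun i j => rfl
  have hM0 : ∀ i j, 0 ≤ M i j := fun i j => Real.sqrt_nonneg _
  set w : Fin d → ℝ := fun i => Real.sqrt (π i * πbar i) with hwdef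
  have hw : ∀ i, 0 < w i := fun i =>
    Real.sqrt_pos.2 (mul_pos (hstat.1 i) (hstatbar.1 i))
  have hsym : ∀ i j, w i * M i j = w j * M j i := by
    intro i j
    rw [hwdef, hMdef, hMdef, ← Real.sqrt_mul (mul_pos (hstat.1 i) (hstatbar.1 i)).le,
      ← Real.sqrt_mul (mul_pos (hstat.1 j) (hstatbar.1 j)).le]
    congr 1
    calc π i * πbar i * (P i j * Pbar i j) = (π i * P i j) * (πbar i * Pbar i j) := by ring
      _ = (π j * P j i) * (πbar j * Pbar j i) := by rw [hrev i j, hrevbar i j]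
      _ = π j * πbar j * (P j i * Pbar j i) := by ring
  have key := rayleigh_le_rho M w hw hsym S hSne
  have hρ : rho M ≤ 1 - ε := by
    have h := hdist
    simp only [mcDist, hM] at h ⊢
    linarith
  have hWpos : 0 < ∑ i ∈ S, w i := Finset.sum_pos (fun i _ => hw i) hSne
  have key2 : ∑ i ∈ S, ∑ j ∈ S, w i * M i j ≤ (1 - ε) * ∑ i ∈ S, w i :=
    key.trans (mul_le_mul_of_nonneg_right hρ hWpos.le)
  -- ratio bounds
  have hlo : ∀ i, (1 - ε/2) * πbar i ≤ π i := by
    intro i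
    have h := (abs_le.1 (hclose i)).1
    have hb := hstatbar.1 i
    have h2 : 1 - ε/2 ≤ π i / πbar i := by linarith
    calc (1 - ε/2) * πbar i ≤ (π i / πbar i) * πbar i :=
          mul_le_mul_of_nonneg_right h2 hb.le
      _ = π i := div_mul_cancel₀ _ hb.ne'
  have hhi : ∀ i, π i ≤ (1 + ε/2) * πbar i := by
    intro i
    have h := (abs_le.1 (hclose i)).2
    have hb := hstatbar.1 i
    have h2 : π i / πbar i ≤ 1 + ε/2 := by linarith
    calc π i = (π i / πbar i) * πbar i := (div_mul_cancel₀ _ hb.ne').symm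
      _ ≤ (1 + ε/2) * πbar i := mul_le_mul_of_nonneg_right h2 hb.le
  set sl : ℝ := Real.sqrt (1 - ε/2) with hsl
  set sh : ℝ := Real.sqrt (1 + ε/2) with hsh
  have hslpos : 0 < sl := Real.sqrt_pos.2 (by linarith)
  have hwlo : ∀ i, sl * πbar i ≤ w i := by
    intro i
    have hb := (hstatbar.1 i).le
    have h1 : (1 - ε/2) * (πbar i * πbar i) ≤ π i * πbar i := by
      have := hlo i
      nlinarith
    have h2 := Real.sqrt_le_sqrt h1
    rw [Real.sqrt_mul (show (0:ℝ) ≤ 1 - ε/2 by linarith) (πbar i * πbar i),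
      Real.sqrt_mul_self hb] at h2
    simp only [hsl, hwdef]
    exact h2
  have hwhi : ∀ i, w i ≤ sh * πbar i := by
    intro i
    have hb := (hstatbar.1 i).le
    have h1 : π i * πbar i ≤ (1 + ε/2) * (πbar i * πbar i) := by
      have := hhi i
      nlinarith
    have h2 := Real.sqrt_le_sqrt h1
    rw [Real.sqrt_mul (show (0:ℝ) ≤ 1 + ε/2 by linarith) (πbar i * πbar i),
      Real.sqrt_mul_self hb] at h2
    simp only [hsh, hwdef]
    exact h2
  set B : Fin d → ℝ := fun i => ∑ j ∈ S, M i j with hB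
  have hB0 : ∀ i, 0 ≤ B i := fun i => Finset.sum_nonneg (fun j _ => hM0 i j)
  have hrw1 : ∑ i ∈ S, ∑ j ∈ S, w i * M i j = ∑ i ∈ S, w i * B i := by
    refine Finset.sum_congr rfl (fun i _ => ?_)
    rw [hB, Finset.mul_sum]
  have step1 : ∑ i ∈ S, w i * B i ≤ (1 - ε) * ∑ i ∈ S, w i := by
    rw [← hrw1]; exact key2
  have step2 : sl * ∑ i ∈ S, πbar i * B i ≤ ∑ i ∈ S, w i * B i := by
    rw [Finset.mul_sum]
    refine Finset.sum_le_sum (fun i _ => ?_)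
    calc sl * (πbar i * B i) = (sl * πbar i) * B i := by ring
      _ ≤ w i * B i := mul_le_mul_of_nonneg_right (hwlo i) (hB0 i)
  have step3 : ∑ i ∈ S, w i ≤ sh * νS := by
    rw [hνS, Finset.mul_sum]
    exact Finset.sum_le_sum (fun i _ => hwhi i)
  set T0 : ℝ := ∑ i ∈ S, πbar i * B i with hT0
  have hT00 : 0 ≤ T0 :=
    Finset.sum_nonneg (fun i _ => mul_nonneg (hstatbar.1 i).le (hB0 i))
  have hchain : sl * T0 ≤ (1 - ε) * (sh * νS) := by
    calc sl * T0 ≤ ∑ i ∈ S, w i * B i := step2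
      _ ≤ (1 - ε) * ∑ i ∈ S, w i := step1
      _ ≤ (1 - ε) * (sh * νS) := mul_le_mul_of_nonneg_left step3 (by linarith)
  -- (1-ε) * sh ≤ (1-ε/2) * sl
  have hkey2 : (1 - ε) * sh ≤ (1 - ε/2) * sl := by
    have e1 : (1 - ε) * sh = Real.sqrt ((1 - ε)^2 * (1 + ε/2)) := by
      rw [Real.sqrt_mul (sq_nonneg _), Real.sqrt_sq (by linarith)]
    have e2 : (1 - ε/2) * sl = Real.sqrt ((1 - ε/2)^2 * (1 - ε/2)) := by
      rw [Real.sqrt_mul (sq_nonneg _), Real.sqrt_sq (by linarith)]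
    rw [e1, e2]
    apply Real.sqrt_le_sqrt
    nlinarith [mul_nonneg (mul_nonneg hε0.le hε0.le) (show (0:ℝ) ≤ 6 - 5*ε by linarith)]
  have hT0le : T0 ≤ (1 - ε/2) * νS := by
    have h1 : sl * T0 ≤ sl * ((1 - ε/2) * νS) := by
      calc sl * T0 ≤ (1 - ε) * (sh * νS) := hchain
        _ = ((1 - ε) * sh) * νS := by ring
        _ ≤ ((1 - ε/2) * sl) * νS := mul_le_mul_of_nonneg_right hkey2 hν.le
        _ = sl * ((1 - ε/2) * νS) := by ring
    exact le_of_mul_le_mul_left h1 hslpos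
  -- rewrite the affinity sum
  set Aaff : ℝ := ∑ i ∈ S, ∑ j ∈ S,
      Real.sqrt (distributionPair S P πbar i j * distributionPair S Pbar πbar i j) with hAaff
  have hAaff_eq : Aaff = T0 / νS := by
    rw [hAaff, hT0]
    rw [Finset.sum_div]
    refine Finset.sum_congr rfl (fun i hi => ?_)
    rw [hB, Finset.mul_sum, Finset.sum_div]
    refine Finset.sum_congr rfl (fun j hj => ?_)
    have h1 : distributionPair S P πbar i j * distributionPair S Pbar πbar i j
        = (πbar i / νS)^2 * (P i j * Pbar i j) := by
      simp only [distributionPair, hνS]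
      ring
    rw [h1, Real.sqrt_mul (sq_nonneg _), Real.sqrt_sq (div_nonneg (hstatbar.1 i).le hν.le),
      hMdef]
    ring
  have hAaff0 : 0 ≤ Aaff := by
    rw [hAaff]
    exact Finset.sum_nonneg fun i _ => Finset.sum_nonneg fun j _ => Real.sqrt_nonneg _
  have hAaff_le : Aaff ≤ 1 - ε/2 := by
    rw [hAaff_eq, div_le_iff₀ hν]
    calc T0 ≤ (1 - ε/2) * νS := hT0le
      _ = (1 - ε/2) * νS := rfl
  -- masses
  set a : ℝ := ∑ i ∈ S, ∑ j ∈ S, distributionPair S P πbar i j with ha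
  set b : ℝ := ∑ i ∈ S, ∑ j ∈ S, distributionPair S Pbar πbar i j with hb
  have hp0 : ∀ i j, 0 ≤ distributionPair S P πbar i j := fun i j =>
    div_nonneg (mul_nonneg (hstatbar.1 i).le (hP.1 i j)) hν.le
  have hq0 : ∀ i j, 0 ≤ distributionPair S Pbar πbar i j := fun i j =>
    div_nonneg (mul_nonneg (hstatbar.1 i).le (hPbar.1 i j)) hν.le
  have ha0 : 0 ≤ a := Finset.sum_nonneg fun i _ => Finset.sum_nonneg fun j _ => hp0 i j
  have hmass_le_one : ∀ (Q : Matrix (Fin d) (Fin d) ℝ), (∀ i j, 0 ≤ Q i j) →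
      (∀ i, ∑ j, Q i j = 1) → ∑ i ∈ S, ∑ j ∈ S, distributionPair S Q πbar i j ≤ 1 := by
    intro Q hQ0 hQ1
    have h1 : ∀ i ∈ S, ∑ j ∈ S, distributionPair S Q πbar i j ≤ πbar i / νS := by
      intro i _
      simp only [distributionPair]
      rw [← Finset.sum_div, ← Finset.mul_sum, ← hνS]
      have hQle : ∑ j ∈ S, Q i j ≤ 1 := by
        rw [← hQ1 i]
        exact Finset.sum_le_sum_of_subset_of_nonneg (Finset.subset_univ S)
          (fun j _ _ => hQ0 i j)
      gcongr
      nlinarith [hstatbar.1 i]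
    calc ∑ i ∈ S, ∑ j ∈ S, distributionPair S Q πbar i j
        ≤ ∑ i ∈ S, πbar i / νS := Finset.sum_le_sum h1
      _ = 1 := by rw [← Finset.sum_div, ← hνS, div_self hν.ne']
  have ha1 : a ≤ 1 := by rw [ha]; exact hmass_le_one P hP.1 hP.2
  have hb1 : b ≤ 1 := by rw [hb]; exact hmass_le_one Pbar hPbar.1 hPbar.2
  have hblo : 1 - ε/16 ≤ b := hmass
  -- Cauchy-Schwarz : Aaff^2 ≤ a * b
  have hCS : Aaff^2 ≤ a * b := by
    have h := Finset.sum_sq_le_sum_mul_sum_of_sq_eq_mul (S ×ˢ S)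
      (f := fun z : Fin d × Fin d => distributionPair S P πbar z.1 z.2)
      (g := fun z : Fin d × Fin d => distributionPair S Pbar πbar z.1 z.2)
      (r := fun z : Fin d × Fin d =>
        Real.sqrt (distributionPair S P πbar z.1 z.2 * distributionPair S Pbar πbar z.1 z.2))
      (fun z _ => hp0 z.1 z.2) (fun z _ => hq0 z.1 z.2)
      (fun z _ => Real.sq_sqrt (mul_nonneg (hp0 z.1 z.2) (hq0 z.1 z.2)))
    rw [Finset.sum_product, Finset.sum_product, Finset.sum_product] at h
    rw [hAaff, ha, hb]
    exact h
  -- final bound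
  have hinfP : distributionInfty S P πbar = 1 - a := by
    simp only [distributionInfty, ha]
  have hinfQ : distributionInfty S Pbar πbar = 1 - b := by
    simp only [distributionInfty, hb]
  rw [hinfP, hinfQ]
  set u : ℝ := 1 - Aaff with hu
  clear_value νS M w B T0 Aaff a b u sl sh
  have hu_lb : ε/2 ≤ u := by rw [hu]; linarith
  have hu_pos : 0 < u := by linarith
  have hAa2 : Aaff^2 ≤ a := by
    calc Aaff^2 ≤ a * b := hCS
      _ ≤ a * 1 := mul_le_mul_of_nonneg_left hb1 ha0
      _ = a := mul_one a
  have hsqle : Real.sqrt ((1 - a) * (1 - b)) ≤ Real.sqrt (ε * u / 8) := by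
    apply Real.sqrt_le_sqrt
    have h1 : 1 - a ≤ 1 - Aaff^2 := by linarith
    have h2 : 1 - b ≤ ε/16 := by linarith
    have h3 : (0:ℝ) ≤ 1 - b := by linarith
    have h4 : 1 - Aaff^2 ≤ 2 * u := by
      have e : 1 - Aaff^2 = u * (1 + Aaff) := by rw [hu]; ring
      have h5 : 1 + Aaff ≤ 2 := by linarith
      calc 1 - Aaff^2 = u * (1 + Aaff) := e
        _ ≤ u * 2 := mul_le_mul_of_nonneg_left h5 hu_pos.le
        _ = 2 * u := by ring
    have h6 : (0:ℝ) ≤ 1 - Aaff^2 := by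
      have : Aaff^2 ≤ 1 := hAa2.trans ha1
      linarith
    calc (1 - a) * (1 - b) ≤ (1 - Aaff^2) * (ε/16) := mul_le_mul h1 h2 h3 h6
      _ ≤ (2 * u) * (ε/16) := mul_le_mul_of_nonneg_right h4 (by linarith)
      _ = ε * u / 8 := by ring
  have hsq2 : Real.sqrt (ε * u / 8) ≤ u / 2 := by
    have h1 : Real.sqrt (ε * u / 8) ≤ Real.sqrt ((u/2)^2) := by
      apply Real.sqrt_le_sqrt
      have h7 : ε * u ≤ (2 * u) * u := mul_le_mul_of_nonneg_right (by linarith) hu_pos.le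
      calc ε * u / 8 ≤ (2 * u) * u / 8 := by linarith
        _ = (u/2)^2 := by ring
    rwa [Real.sqrt_sq (by positivity)] at h1
  have hfinal : Real.sqrt ((1 - a) * (1 - b)) ≤ u / 2 := hsqle.trans hsq2
  have hε2 : ε^2 ≤ ε := by
    have h8 := mul_le_mul_of_nonneg_left hε1.le hε0.le
    calc ε^2 = ε * ε := by ring
      _ ≤ ε * 1 := h8
      _ = ε := mul_one ε
  have : ε^2/128 ≤ ε/4 := by linarith
  have : ε/4 ≤ u/2 := by linarith
  linarith [hfinal]
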